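/- Let d ≥ 1 and 0 < b ≤ 1/(2d). Let z ∈ {0,1}^d be a fixed binary vector and let N₁,…,N_d be independent Laplace(b) random variables. Then the probability that the coordinatewise rounding of z + N recovers z exactly, i.e., P[ for every i ∈ {1,…,d}, the indicator 1{z_i + N_i ≥ 1/2} equals z_i ], is at least 1 − (d/2)·e^{−d}. -/

import Mathlib

open MeasureTheory
open scoped ENNReal

noncomputable section

/-- The d-fold product of the Laplace(b) distribution on ℝ^d, given by its density. -/
def laplacePi (d : ℕ) (b : ℝ) : Measure (Fin d → ℝ) :=
  volume.withDensity fun x => ENNReal.ofReal (∏ i, (1 / (2 * b)) * Real.exp (-|x i| / b))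

section LaplaceAux

open Set Real Filter

theorem lintegral_fin_prod : ∀ (n : ℕ) (f : Fin n → ℝ → ℝ≥0∞), (∀ i, Measurable (f i)) →
    ∫⁻ x : Fin n → ℝ, ∏ i, f i (x i) = ∏ i, ∫⁻ t, f i t := by
  intro n
  induction n with
  | zero => intro f _; simp [volume_pi, lintegral_const, Measure.pi_empty_univ]
  | succ n ih =>
    intro f hf
    rw [volume_pi, ← ((measurePreserving_piFinSuccAbove
        (fun _ : Fin (n+1) => (volume : Measure ℝ)) 0).symm).lintegral_comp_emb
        (MeasurableEquiv.measurableEmbedding _)]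
    simp_rw [MeasurableEquiv.piFinSuccAbove_symm_apply, Fin.insertNthEquiv,
      Fin.prod_univ_succ, Fin.insertNth_zero]
    simp only [Equiv.coe_fn_mk, Fin.cons_zero, Fin.cons_succ, cast_eq]
    have hmeas : Measurable (fun y : Fin n → ℝ => ∏ x : Fin n, f x.succ (y x)) :=
      Finset.measurable_prod _ fun i _ => (hf i.succ).comp (measurable_pi_apply i)
    rw [lintegral_prod_mul (μ := volume) (ν := Measure.pi fun _ => (volume : Measure ℝ))
      (f := f 0) (g := fun y : Fin n → ℝ => ∏ x : Fin n, f x.succ (y x))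
      (hf 0).aemeasurable hmeas.aemeasurable]
    rw [← volume_pi, ih (fun i => f i.succ) (fun i => hf _)]

variable {b : ℝ}

theorem integral_exp_div_Ioi (hb : 0 < b) (c : ℝ) :
    ∫ x in Ioi c, Real.exp (-x / b) = b * Real.exp (-c / b) := by
  have hderiv : ∀ x ∈ Ici c, HasDerivAt (fun x => -b * Real.exp (-x / b)) (Real.exp (-x / b)) x := by
    intro x _
    have h1 : HasDerivAt (fun x : ℝ => -x / b) (-1 / b) x := by
      simpa using ((hasDerivAt_id x).neg.div_const b)
    have := (h1.exp).const_mul (-b)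
    refine this.congr_deriv ?_
    rw [mul_left_comm, show -b * (-1 / b) = 1 by field_simp [hb.ne'], mul_one]
  have hint : IntegrableOn (fun x => Real.exp (-x / b)) (Ioi c) := by
    have := exp_neg_integrableOn_Ioi c (inv_pos.mpr hb)
    refine this.congr_fun (fun x _ => ?_) measurableSet_Ioi
    simp only [neg_div, div_eq_inv_mul, neg_mul, mul_neg]
  have htend : Tendsto (fun x => -b * Real.exp (-x / b)) atTop (nhds 0) := by
    have h2 : Tendsto (fun x : ℝ => -x / b) atTop atBot := by
      apply Tendsto.atBot_div_const hb
      exact tendsto_neg_atTop_atBot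
    have := (Real.tendsto_exp_atBot.comp h2).const_mul (-b)
    simpa using this
  have := integral_Ioi_of_hasDerivAt_of_tendsto' hderiv hint htend
  rw [this]
  ring

noncomputable def lapg (b : ℝ) (t : ℝ) : ℝ := (1 / (2 * b)) * Real.exp (-|t| / b)

theorem lapg_nonneg (hb : 0 < b) (t : ℝ) : 0 ≤ lapg b t := by
  unfold lapg; positivity

theorem lapg_cont (b : ℝ) : Continuous (lapg b) := by
  unfold lapg
  exact continuous_const.mul (Real.continuous_exp.comp ((continuous_abs.neg).div_const b))

theorem lapg_integrableOn_Ioi (hb : 0 < b) {c : ℝ} (hc : 0 ≤ c) :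
    IntegrableOn (lapg b) (Ioi c) := by
  have : IntegrableOn (fun x => (1 / (2 * b)) * Real.exp (-x / b)) (Ioi c) := by
    have := exp_neg_integrableOn_Ioi c (inv_pos.mpr hb)
    have h2 : IntegrableOn (fun x => (1 / (2 * b)) * Real.exp (-(b⁻¹ * x))) (Ioi c) := by
      simpa [neg_mul, IntegrableOn] using this.const_mul (1 / (2 * b))
    refine h2.congr_fun (fun x _ => ?_) measurableSet_Ioi
    ring_nf
  refine this.congr_fun (fun x hx => ?_) measurableSet_Ioi
  unfold lapg
  rw [abs_of_pos (lt_of_le_of_lt hc hx)]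

theorem lapg_integral_Ioi (hb : 0 < b) {c : ℝ} (hc : 0 ≤ c) :
    ∫ x in Ioi c, lapg b x = (1 / 2) * Real.exp (-c / b) := by
  have heq : ∫ x in Ioi c, lapg b x = ∫ x in Ioi c, (1 / (2 * b)) * Real.exp (-x / b) := by
    refine setIntegral_congr_fun measurableSet_Ioi (fun x hx => ?_)
    unfold lapg
    rw [abs_of_pos (lt_of_le_of_lt hc hx)]
  rw [heq, MeasureTheory.integral_const_mul, integral_exp_div_Ioi hb c]
  field_simp

theorem lapg_neg (t : ℝ) : lapg b (-t) = lapg b t := by unfold lapg; rw [abs_neg]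

theorem lapg_integrableOn_Iic (hb : 0 < b) {c : ℝ} (hc : c ≤ 0) :
    IntegrableOn (lapg b) (Iic c) := by
  rw [← Measure.map_neg_eq_self (volume : Measure ℝ)]
  have m : MeasurableEmbedding fun x : ℝ => -x := (Homeomorph.neg ℝ).measurableEmbedding
  rw [m.integrableOn_map_iff]
  simp_rw [Function.comp_def, lapg_neg, neg_preimage, neg_Iic]
  exact (integrableOn_Ici_iff_integrableOn_Ioi).mpr (lapg_integrableOn_Ioi hb (by linarith : (0:ℝ) ≤ -c))

theorem lapg_integral_Iic (hb : 0 < b) {c : ℝ} (hc : c ≤ 0) :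
    ∫ x in Iic c, lapg b x = (1 / 2) * Real.exp (c / b) := by
  have : ∫ x in Iic c, lapg b (-x) = ∫ x in Ioi (-c), lapg b x :=
    integral_comp_neg_Iic c (lapg b)
  simp_rw [lapg_neg] at this
  rw [this, lapg_integral_Ioi hb (by linarith : (0:ℝ) ≤ -c), neg_neg]

noncomputable def lapF (b : ℝ) (t : ℝ) : ℝ≥0∞ := ENNReal.ofReal (lapg b t)

theorem lapF_meas (b : ℝ) : Measurable (lapF b) :=
  ENNReal.measurable_ofReal.comp (lapg_cont b).measurable

theorem lapF_Ici (hb : 0 < b) {c : ℝ} (hc : 0 ≤ c) :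
    ∫⁻ t in Ici c, lapF b t = ENNReal.ofReal ((1 / 2) * Real.exp (-c / b)) := by
  unfold lapF
  rw [← lapg_integral_Ioi hb hc]
  rw [← ofReal_integral_eq_lintegral_ofReal
    ((integrableOn_Ici_iff_integrableOn_Ioi).mpr (lapg_integrableOn_Ioi hb hc))
    (ae_of_all _ (fun t => lapg_nonneg hb t))]
  rw [integral_Ici_eq_integral_Ioi]

theorem lapF_Iic (hb : 0 < b) {c : ℝ} (hc : c ≤ 0) :
    ∫⁻ t in Iic c, lapF b t = ENNReal.ofReal ((1 / 2) * Real.exp (c / b)) := by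
  unfold lapF
  rw [← lapg_integral_Iic hb hc]
  rw [← ofReal_integral_eq_lintegral_ofReal (lapg_integrableOn_Iic hb hc)
    (ae_of_all _ (fun t => lapg_nonneg hb t))]

theorem lapF_Iio (hb : 0 < b) {c : ℝ} (hc : c ≤ 0) :
    ∫⁻ t in Iio c, lapF b t = ENNReal.ofReal ((1 / 2) * Real.exp (c / b)) := by
  rw [← lapF_Iic hb hc]
  exact setLIntegral_congr Iio_ae_eq_Iic

theorem lapF_total (hb : 0 < b) : ∫⁻ t, lapF b t = 1 := by
  rw [← lintegral_add_compl (lapF b) (measurableSet_Iic (a := (0:ℝ)))]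
  rw [compl_Iic, lapF_Iic hb le_rfl]
  have h2 : ∫⁻ t in Ioi (0:ℝ), lapF b t = ENNReal.ofReal ((1 / 2) * Real.exp (-0 / b)) := by
    rw [← lapF_Ici hb le_rfl]
    exact (setLIntegral_congr Ioi_ae_eq_Ici)
  rw [h2, ← ENNReal.ofReal_add (by positivity) (by positivity)]
  norm_num

end LaplaceAux

section MainAux

open Set

theorem binary_rounding_recovery_aux
    (d : ℕ) (hd : 1 ≤ d) (b : ℝ) (hb : 0 < b) (hb2 : b ≤ 1 / (2 * (d : ℝ)))
    (z : Fin d → ℝ) (hz : ∀ i, z i = 0 ∨ z i = 1) :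
    ENNReal.ofReal (1 - (d : ℝ) / 2 * Real.exp (-(d : ℝ)))
      ≤ laplacePi d b
          {n | ∀ i, (if (1 : ℝ) / 2 ≤ z i + n i then (1 : ℝ) else 0) = z i} := by
  classical
  have hdens : (fun x : Fin d → ℝ => ENNReal.ofReal (∏ i, (1 / (2 * b)) * Real.exp (-|x i| / b)))
      = fun x => ∏ i, lapF b (x i) := by
    funext x
    exact ENNReal.ofReal_prod_of_nonneg (fun i _ => lapg_nonneg hb (x i))
  set S : Fin d → Set ℝ := fun i => if z i = 0 then Ici (1/2 : ℝ) else Iio (-(1/2) : ℝ) with hSdef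
  have hS_meas : ∀ i, MeasurableSet (S i) := by
    intro i; rw [hSdef]; dsimp only; split_ifs
    · exact measurableSet_Ici
    · exact measurableSet_Iio
  set C : ℝ≥0∞ := ENNReal.ofReal ((1/2) * Real.exp (-(1/(2*b)))) with hCdef
  have hS_measure : ∀ i, ∫⁻ t in S i, lapF b t ≤ C := by
    intro i
    rw [hSdef]; dsimp only
    split_ifs
    · rw [lapF_Ici hb (by norm_num : (0:ℝ) ≤ 1/2)]
      apply le_of_eq; congr 1
      rw [neg_div, div_div]
    · rw [lapF_Iio hb (by norm_num : -(1/2 : ℝ) ≤ 0)]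
      apply le_of_eq; congr 1
      rw [neg_div, div_div]
  have hcond : ∀ i (t : ℝ),
      ((if (1:ℝ)/2 ≤ z i + t then (1:ℝ) else 0) = z i) ↔ t ∉ S i := by
    intro i t
    rcases hz i with h | h
    · have hSi : S i = Ici (1/2 : ℝ) := by rw [hSdef]; simp [h]
      rw [hSi, h, zero_add, mem_Ici]
      constructor
      · intro hc hmem
        rw [if_pos hmem] at hc; norm_num at hc
      · intro hmem; rw [if_neg hmem]
    · have hSi : S i = Iio (-(1/2) : ℝ) := by rw [hSdef]; simp [h]
      rw [hSi, h, mem_Iio, not_lt]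
      constructor
      · intro hc
        by_contra hlt
        push_neg at hlt
        rw [if_neg (by linarith)] at hc; norm_num at hc
      · intro hge; rw [if_pos (by linarith)]
  set B : Set (Fin d → ℝ) := ⋃ i, Function.eval i ⁻¹' (S i) with hBdef
  have hB_meas : MeasurableSet B :=
    MeasurableSet.iUnion fun i =>
      (measurable_pi_apply (X := fun _ : Fin d => ℝ) i) (hS_meas i)
  have hEset : {n : Fin d → ℝ | ∀ i, (if (1 : ℝ) / 2 ≤ z i + n i then (1 : ℝ) else 0) = z i}
      = Bᶜ := by
    ext n
    simp only [mem_setOf_eq, hBdef, compl_iUnion, mem_iInter, mem_compl_iff, mem_preimage,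
      Function.eval]
    exact forall_congr' fun i => hcond i (n i)
  have huniv : laplacePi d b Set.univ = 1 := by
    rw [laplacePi, withDensity_apply _ MeasurableSet.univ, Measure.restrict_univ, hdens,
      lintegral_fin_prod d _ (fun i => lapF_meas b)]
    simp [lapF_total hb]
  have hcyl : ∀ i, laplacePi d b (Function.eval i ⁻¹' (S i)) ≤ C := by
    intro i
    have hmeas_i : MeasurableSet ((Function.eval i ⁻¹' (S i)) : Set (Fin d → ℝ)) :=
      (measurable_pi_apply (X := fun _ : Fin d => ℝ) i) (hS_meas i)
    rw [laplacePi, withDensity_apply _ hmeas_i, ← lintegral_indicator hmeas_i, hdens]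
    set g : Fin d → ℝ → ℝ≥0∞ := fun j => if j = i then (S i).indicator (lapF b) else lapF b
      with hgdef
    have hg_meas : ∀ j, Measurable (g j) := by
      intro j; rw [hgdef]; dsimp only; split_ifs
      · exact (lapF_meas b).indicator (hS_meas i)
      · exact lapF_meas b
    have hptwise : (Function.eval i ⁻¹' (S i)).indicator (fun x => ∏ j, lapF b (x j))
        = fun x => ∏ j, g j (x j) := by
      funext x
      by_cases hx : x i ∈ S i
      · rw [indicator_of_mem (show x ∈ Function.eval i ⁻¹' (S i) from hx)]
        refine Finset.prod_congr rfl fun j _ => ?_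
        rw [hgdef]; dsimp only
        split_ifs with hj
        · subst hj; rw [indicator_of_mem hx]
        · rfl
      · rw [indicator_of_notMem (show x ∉ Function.eval i ⁻¹' (S i) from hx)]
        symm
        refine Finset.prod_eq_zero (Finset.mem_univ i) ?_
        rw [hgdef]; dsimp only
        rw [if_pos rfl, indicator_of_notMem hx]
    rw [hptwise, lintegral_fin_prod d g hg_meas]
    have hone : ∀ j ∈ Finset.univ, j ≠ i → ∫⁻ t, g j t = 1 := by
      intro j _ hj
      rw [hgdef]; dsimp only; rw [if_neg hj]; exact lapF_total hb
    rw [Finset.prod_eq_single i hone (by simp)]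
    rw [hgdef]; dsimp only; rw [if_pos rfl, lintegral_indicator (hS_meas i)]
    exact hS_measure i
  have hBle : laplacePi d b B ≤ (d : ℝ≥0∞) * C := by
    refine (measure_iUnion_le _).trans ?_
    rw [tsum_fintype]
    calc ∑ i : Fin d, laplacePi d b (Function.eval i ⁻¹' (S i))
        ≤ ∑ _i : Fin d, C := Finset.sum_le_sum fun i _ => hcyl i
      _ = (d : ℝ≥0∞) * C := by
          rw [Finset.sum_const, Finset.card_univ, Fintype.card_fin, nsmul_eq_mul]
  have hBfin : laplacePi d b B ≠ ∞ := by
    refine ne_top_of_le_ne_top ?_ (measure_mono (subset_univ B))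
    rw [huniv]; exact ENNReal.one_ne_top
  have hcompl : laplacePi d b Bᶜ = 1 - laplacePi d b B := by
    rw [measure_compl hB_meas hBfin, huniv]
  have hdC : (d : ℝ≥0∞) * C ≤ ENNReal.ofReal ((d : ℝ) / 2 * Real.exp (-(d : ℝ))) := by
    rw [hCdef, ← ENNReal.ofReal_natCast, ← ENNReal.ofReal_mul (Nat.cast_nonneg d)]
    apply ENNReal.ofReal_le_ofReal
    have hd1 : (1 : ℝ) ≤ d := by exact_mod_cast hd
    have hdb : (d : ℝ) ≤ 1 / (2 * b) := by
      rw [le_div_iff₀ (by positivity)] at hb2 ⊢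
      nlinarith
    have hexp : Real.exp (-(1/(2*b))) ≤ Real.exp (-(d : ℝ)) := by
      apply Real.exp_le_exp.mpr; linarith
    calc (d : ℝ) * ((1/2) * Real.exp (-(1/(2*b))))
        ≤ (d : ℝ) * ((1/2) * Real.exp (-(d:ℝ))) := by
          apply mul_le_mul_of_nonneg_left _ (Nat.cast_nonneg d)
          apply mul_le_mul_of_nonneg_left hexp (by norm_num)
      _ = (d : ℝ) / 2 * Real.exp (-(d : ℝ)) := by ring
  rw [hEset, hcompl]
  calc ENNReal.ofReal (1 - (d : ℝ) / 2 * Real.exp (-(d : ℝ)))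
      = 1 - ENNReal.ofReal ((d : ℝ) / 2 * Real.exp (-(d : ℝ))) := by
        rw [ENNReal.ofReal_sub _ (by positivity), ENNReal.ofReal_one]
    _ ≤ 1 - (d : ℝ≥0∞) * C := tsub_le_tsub_left hdC 1
    _ ≤ 1 - laplacePi d b B := tsub_le_tsub_left hBle 1

end MainAux

/-- **Binary rounding recovery (utility core of Theorem 2 of the paper).**
For a fixed binary vector `z ∈ {0,1}^d` and independent `Laplace(b)` noise coordinates
with `0 < b ≤ 1/(2d)`, the coordinatewise rounding of `z + N` at threshold `1/2`
recovers `z` exactly with probability at least `1 - (d/2) e^{-d}`. -/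
theorem binary_rounding_recovery
    (d : ℕ) (hd : 1 ≤ d) (b : ℝ) (hb : 0 < b) (hb2 : b ≤ 1 / (2 * (d : ℝ)))
    (z : Fin d → ℝ) (hz : ∀ i, z i = 0 ∨ z i = 1) :
    ENNReal.ofReal (1 - (d : ℝ) / 2 * Real.exp (-(d : ℝ)))
      ≤ laplacePi d b
          {n | ∀ i, (if (1 : ℝ) / 2 ≤ z i + n i then (1 : ℝ) else 0) = z i} :=
  binary_rounding_recovery_aux d hd b hb hb2 z hz

end
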